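/- Let μ be a probability measure assigning to configurations (a,ω) a density proportional to Π_{e∈E} w_β(a_e, ω_e) dρ(a) where w_β(t, ω) = e^{-βt}(e^{2βt}-1)^ω for t ≥ 0 depending smoothly on β, on a finite edge set E with a_e ≥ 0. Then for any bounded measurable f, (d/dβ) μ[f] = Σ_{e∈E} Cov_μ(f, 2 a_e ω_e / (1 - e^{-2β a_e}) - a_e), with the convention that 2a_e ω_e/(1-e^{-2βa_e}) = 0 when a_e = 0. -/

import Mathlib

open Real

noncomputable def Wfun (b t : ℝ) (o : Bool) : ℝ :=
  Real.exp (-b * t) * (Real.exp (2 * b * t) - 1) ^ (if o then (1:ℕ) else 0)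

noncomputable def dWfun (b t : ℝ) (o : Bool) : ℝ :=
  if o then (-(t * Real.exp (-b * t))) * (Real.exp (2 * b * t) - 1)
      + Real.exp (-b * t) * (2 * t * Real.exp (2 * b * t))
  else -(t * Real.exp (-b * t))

lemma W_nonneg {b t : ℝ} (hb : 0 ≤ b) (ht : 0 ≤ t) (o : Bool) : 0 ≤ Wfun b t o := by
  have h1 : (1:ℝ) ≤ Real.exp (2 * b * t) := Real.one_le_exp (by positivity)
  have h0 : (0:ℝ) ≤ Real.exp (2 * b * t) - 1 := by linarith
  cases o <;> simp [Wfun] <;> positivity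

lemma hasDerivAt_W (b t : ℝ) (o : Bool) :
    HasDerivAt (fun b' => Wfun b' t o) (dWfun b t o) b := by
  have h1 : HasDerivAt (fun b' : ℝ => Real.exp (-b' * t)) (-(t * Real.exp (-b * t))) b := by
    have : HasDerivAt (fun b' : ℝ => -b' * t) (-1 * t) b := (hasDerivAt_id b).neg.mul_const t
    simpa [mul_comm] using this.exp
  have h2 : HasDerivAt (fun b' : ℝ => Real.exp (2 * b' * t) - 1) (2 * t * Real.exp (2 * b * t)) b := by
    have : HasDerivAt (fun b' : ℝ => 2 * b' * t) (2 * t) b := by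
      simpa using ((hasDerivAt_id b).const_mul 2).mul_const t
    simpa [mul_comm] using this.exp.sub_const 1
  cases o
  · simpa [Wfun, dWfun] using h1
  · have : HasDerivAt (fun b' => Real.exp (-b' * t) * (Real.exp (2 * b' * t) - 1)) _ b :=
      h1.mul h2
    simpa [Wfun, dWfun, mul_comm, mul_left_comm] using this

lemma exp_prod_one (s : ℝ) : Real.exp (-s) * Real.exp s = 1 := by
  rw [← Real.exp_add]; simp

lemma dW_eq_G_mul_W {β : ℝ} (hβ : 0 < β) (t : ℝ) (o : Bool) :
    dWfun β t o
      = ((if t = 0 then 0 else 2 * t * (if o then (1:ℝ) else 0) / (1 - Real.exp (-2 * β * t))) - t)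
        * Wfun β t o := by
  rcases eq_or_ne t 0 with rfl | ht
  · cases o <;> simp [dWfun, Wfun]
  · have key : Real.exp (-2 * β * t) * Real.exp (2 * β * t) = 1 := by
      have := exp_prod_one (2 * β * t); rw [← this]; ring_nf
    have hd : 1 - Real.exp (-2 * β * t) ≠ 0 := by
      intro h
      have h1 : Real.exp (-2 * β * t) = Real.exp 0 := by
        rw [Real.exp_zero]; linarith
      have h2 : -2 * β * t = 0 := Real.exp_eq_exp.mp h1
      apply ht; nlinarith
    cases o
    · simp [dWfun, Wfun, ht]
    · simp only [dWfun, Wfun, if_true, ht, if_false, pow_one]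
      have key' : Real.exp (-(2*(β*t))) * Real.exp (2*(β*t)) = 1 := by
        rw [← Real.exp_add]; simp
      have hd' : 1 - Real.exp (-(2*(β*t))) ≠ 0 := by
        rw [show -(2*(β*t)) = -2*β*t by ring]; exact hd
      rw [show -2 * β * t = -(2*(β*t)) by ring, show 2 * β * t = 2*(β*t) by ring,
        show -β * t = -(β*t) by ring]
      set A := Real.exp (-(β*t)) with hA
      set B := Real.exp (2*(β*t)) with hB
      set Ee := Real.exp (-(2*(β*t))) with hEe
      rw [mul_one]
      have expand : 2 * t / (1 - Ee) - t = (2*t - t*(1-Ee))/(1-Ee) := by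
        field_simp
      rw [expand, div_mul_eq_mul_div, eq_div_iff hd']
      linear_combination (-2*t*A) * key'

lemma dW_abs_le {β b t : ℝ} (hβ : 0 < β) (ht : 0 ≤ t) (hb : β/2 ≤ b) (o : Bool) :
    |dWfun b t o| ≤ (t + 2/β) * Wfun b t o := by
  have hbpos : 0 < b := lt_of_lt_of_le (by linarith) hb
  have hA : 0 < Real.exp (-b*t) := Real.exp_pos _
  have hc : 0 < 2/β := by positivity
  cases o
  · simp only [dWfun, Wfun, Bool.false_eq_true, if_false, pow_zero, mul_one, abs_neg, abs_mul,
      abs_of_nonneg ht, abs_of_pos hA]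
    nlinarith
  · have hB1 : 2*b*t + 1 ≤ Real.exp (2*b*t) := by
      have := Real.add_one_le_exp (2*b*t); linarith
    have hcb : 1 ≤ (2/β) * b := by
      rw [div_mul_eq_mul_div, le_div_iff₀ hβ]; linarith
    simp only [dWfun, Wfun, if_true, pow_one]
    have heq : (-(t * Real.exp (-b * t))) * (Real.exp (2 * b * t) - 1)
        + Real.exp (-b * t) * (2 * t * Real.exp (2 * b * t))
        = Real.exp (-b*t) * (t * Real.exp (2*b*t) + t) := by ring
    rw [heq, abs_of_nonneg (by positivity)]
    have key : t * Real.exp (2*b*t) + t ≤ (t + 2/β) * (Real.exp (2*b*t) - 1) := by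
      have f1 : (2/β) * (2*b*t + 1) ≤ (2/β) * Real.exp (2*b*t) :=
        mul_le_mul_of_nonneg_left hB1 (le_of_lt hc)
      have f2 : (2*t) * 1 ≤ (2*t) * ((2/β) * b) :=
        mul_le_mul_of_nonneg_left hcb (by linarith)
      nlinarith [f1, f2]
    calc Real.exp (-b*t) * (t * Real.exp (2*b*t) + t)
        ≤ Real.exp (-b*t) * ((t + 2/β) * (Real.exp (2*b*t) - 1)) := by
          exact mul_le_mul_of_nonneg_left key (le_of_lt hA)
      _ = (t + 2/β) * (Real.exp (-b*t) * (Real.exp (2*b*t) - 1)) := by ring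

lemma W_le_shift {β b t : ℝ} (ht : 0 ≤ t) (hb1 : 0 ≤ b) (hb2 : b ≤ 2*β) (o : Bool) :
    Wfun b t o ≤ 2 * Real.exp ((b-β)*(if o then t else -t)) * Wfun β t o := by
  cases o
  · simp only [Wfun, Bool.false_eq_true, if_false, pow_zero, mul_one]
    have E : Real.exp ((b-β)*(-t)) * Real.exp (-β*t) = Real.exp (-b*t) := by
      rw [← Real.exp_add]; ring_nf
    have := Real.exp_pos (-b*t)
    nlinarith [this, E]
  · simp only [Wfun, if_true, pow_one]
    have E1 : Real.exp (-b*t) * Real.exp (2*b*t) = Real.exp (b*t) := by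
      rw [← Real.exp_add]; ring_nf
    have E2 : Real.exp ((b-β)*t) * Real.exp (-β*t) = Real.exp ((b-2*β)*t) := by
      rw [← Real.exp_add]; ring_nf
    have E3 : Real.exp ((b-2*β)*t) * Real.exp (2*β*t) = Real.exp (b*t) := by
      rw [← Real.exp_add]; ring_nf
    have hK : Real.exp ((b-2*β)*t) ≤ 1 := by
      rw [Real.exp_le_one_iff]
      have : b - 2*β ≤ 0 := by linarith
      exact mul_nonpos_of_nonpos_of_nonneg this ht
    have s1 : b*t + 1 ≤ Real.exp (b*t) := by have := Real.add_one_le_exp (b*t); linarith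
    have s2 : -b*t + 1 ≤ Real.exp (-b*t) := Real.add_one_le_exp (-b*t)
    have E4 : Real.exp ((b-β)*t) * Real.exp (-β*t) * Real.exp (2*β*t) = Real.exp (b*t) := by
      rw [← Real.exp_add, ← Real.exp_add]; ring_nf
    nlinarith [E1, E2, E4, hK, s1, s2]

lemma W_exp_plus {β t : ℝ} (hβ : 0 < β) (ht : 0 ≤ t) (o : Bool) :
    Real.exp ((β/2)*(if o then t else -t)) * Wfun β t o ≤ Wfun (3*β/2) t o := by
  cases o
  · simp only [Wfun, Bool.false_eq_true, if_false, pow_zero, mul_one]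
    have E : Real.exp ((β/2)*(-t)) * Real.exp (-β*t) = Real.exp (-(3*β/2)*t) := by
      rw [← Real.exp_add]; ring_nf
    rw [E]
  · simp only [Wfun, if_true, pow_one]
    have E1 : Real.exp ((β/2)*t) * Real.exp (-β*t) = Real.exp (-(β/2)*t) := by
      rw [← Real.exp_add]; ring_nf
    have E2 : Real.exp (-(β/2)*t) * Real.exp (2*β*t) = Real.exp ((3*β/2)*t) := by
      rw [← Real.exp_add]; ring_nf
    have E3 : Real.exp (-(3*β/2)*t) * Real.exp (2*(3*β/2)*t) = Real.exp ((3*β/2)*t) := by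
      rw [← Real.exp_add]; ring_nf
    have hK : Real.exp (-(3*β/2)*t) ≤ Real.exp (-(β/2)*t) := by
      apply Real.exp_le_exp.mpr; nlinarith
    have E4 : Real.exp ((β/2)*t) * (Real.exp (-β*t) * Real.exp (2*β*t))
        = Real.exp ((3*β/2)*t) := by
      rw [← Real.exp_add, ← Real.exp_add]; ring_nf
    nlinarith [E1, E4, E3, hK]

lemma W_exp_minus {β t : ℝ} (hβ : 0 < β) (ht : 0 ≤ t) (o : Bool) :
    Real.exp (-(β/2)*(if o then t else -t)) * Wfun β t o ≤ 2 * Wfun (β/2) t o := by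
  cases o
  · simp only [Wfun, Bool.false_eq_true, if_false, pow_zero, mul_one]
    have E : Real.exp (-(β/2)*(-t)) * Real.exp (-β*t) = Real.exp (-(β/2)*t) := by
      rw [← Real.exp_add]; ring_nf
    rw [E]
    nlinarith [Real.exp_pos (-(β/2)*t)]
  · simp only [Wfun, if_true, pow_one]
    -- LHS = exp(-βt/2) exp(-βt) (exp(2βt)-1) = exp(βt/2) - exp(-3βt/2)
    -- RHS = 2 exp(-βt/2)(exp(βt)-1) = 2 exp(βt/2) - 2 exp(-βt/2)
    -- need: 2 exp(-βt/2) ≤ exp(βt/2) + exp(-3βt/2)  (AM-GM)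
    have E1 : Real.exp (-(β/2)*t) * Real.exp (-β*t) * Real.exp (2*β*t)
        = Real.exp ((β/2)*t) := by rw [← Real.exp_add, ← Real.exp_add]; ring_nf
    have E2 : Real.exp (-(β/2)*t) * Real.exp (-β*t) = Real.exp (-(3*β/2)*t) := by
      rw [← Real.exp_add]; ring_nf
    have E3 : Real.exp (-(β/2)*t) * Real.exp (2*(β/2)*t) = Real.exp ((β/2)*t) := by
      rw [← Real.exp_add]; ring_nf
    have hm : Real.exp (-(β/2)*t) * Real.exp (-(β/2)*t)
        = Real.exp ((β/2)*t) * Real.exp (-(3*β/2)*t) := by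
      rw [← Real.exp_add, ← Real.exp_add]; ring_nf
    have amgm : 2 * Real.exp (-(β/2)*t) ≤ Real.exp ((β/2)*t) + Real.exp (-(3*β/2)*t) := by
      nlinarith [sq_nonneg (Real.exp ((β/2)*t) - Real.exp (-(β/2)*t)), hm,
        Real.exp_pos ((β/2)*t), Real.exp_pos (-(β/2)*t), Real.exp_pos (-(3*β/2)*t)]
    nlinarith [E1, E2, E3, amgm, Real.exp_pos (-(β/2)*t)]

lemma G_abs_le {β t : ℝ} (hβ : 0 < β) (ht : 0 ≤ t) (c : ℝ) (hc : 0 ≤ c) (hc1 : c ≤ 1) :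
    |(if t = 0 then 0 else 2 * t * c / (1 - Real.exp (-2 * β * t))) - t| ≤ t + 1/β := by
  have h1β : 0 < 1/β := by positivity
  rcases eq_or_ne t 0 with rfl | htne
  · simp; positivity
  · have htpos : 0 < t := lt_of_le_of_ne ht (Ne.symm htne)
    have hXlt : Real.exp (-2*β*t) < 1 := by
      rw [show (1:ℝ) = Real.exp 0 from Real.exp_zero.symm]
      apply Real.exp_lt_exp.mpr; nlinarith
    have hD : 0 < 1 - Real.exp (-2*β*t) := by linarith
    have hXpos : 0 < Real.exp (-2*β*t) := Real.exp_pos _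
    rw [if_neg htne, abs_le]
    have hpos : 0 ≤ 2 * t * c / (1 - Real.exp (-2*β*t)) := by positivity
    constructor
    · linarith [hpos, h1β]
    · have key : 2 * t * c / (1 - Real.exp (-2*β*t)) ≤ 2*t + 1/β := by
        rw [div_le_iff₀ hD]
        have hXB : Real.exp (-2*β*t) * Real.exp (2*β*t) = 1 := by
          rw [← Real.exp_add, show -2*β*t + 2*β*t = 0 by ring, Real.exp_zero]
        have hexp : 2*β*t + 1 ≤ Real.exp (2*β*t) := Real.add_one_le_exp (2*β*t)
        have h2 : (2*β*t+1) * Real.exp (-2*β*t) ≤ 1 := by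
          nlinarith [mul_le_mul_of_nonneg_right hexp (le_of_lt hXpos)]
        have h3 : (1/β)*((2*β*t+1) * Real.exp (-2*β*t)) ≤ (1/β)*1 :=
          mul_le_mul_of_nonneg_left h2 (le_of_lt h1β)
        have h5 : β*(1/β)*(t*Real.exp (-2*β*t)) = t*Real.exp (-2*β*t) := by
          rw [mul_one_div_cancel (ne_of_gt hβ), one_mul]
        nlinarith [h3, h5, htpos.le, hXpos.le, hc1, hc]
      linarith

lemma measurable_boolcomp {E : Type*} [Fintype E] (g : ℝ → Bool → ℝ)
    (hgt : ∀ o, Measurable fun t => g t o) (e : E) :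
    Measurable fun x : (E → ℝ) × (E → Bool) => g (x.1 e) (x.2 e) := by
  have h1 : Measurable fun x : (E → ℝ) × (E → Bool) => x.1 e :=
    (measurable_pi_apply e).comp measurable_fst
  have h2 : Measurable fun x : (E → ℝ) × (E → Bool) => x.2 e :=
    (measurable_pi_apply e).comp measurable_snd
  have heq : (fun x : (E → ℝ) × (E → Bool) => g (x.1 e) (x.2 e))
      = fun x => if x.2 e = true then g (x.1 e) true else g (x.1 e) false := by
    funext x; cases hx : x.2 e <;> simp [hx]
  rw [heq]
  exact Measurable.ite (h2 (measurableSet_singleton true))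
    ((hgt true).comp h1) ((hgt false).comp h1)

lemma measurable_W_t (b : ℝ) (o : Bool) : Measurable fun t => Wfun b t o := by
  unfold Wfun; fun_prop

lemma measurable_dW_t (b : ℝ) (o : Bool) : Measurable fun t => dWfun b t o := by
  unfold dWfun; cases o <;> simp <;> fun_prop

lemma measurable_G_t (β : ℝ) (o : Bool) :
    Measurable fun t : ℝ =>
      (if t = 0 then 0 else 2 * t * (if o then (1:ℝ) else 0) / (1 - Real.exp (-2 * β * t))) - t := by
  apply Measurable.sub _ measurable_id
  apply Measurable.ite
  · simpa using measurableSet_singleton (0:ℝ)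
  · fun_prop
  · fun_prop

set_option maxHeartbeats 2000000 in
open MeasureTheory in
theorem stmt_11 {E : Type*} [Fintype E]
    (ρ : Measure ((E → ℝ) × (E → Bool))) [IsFiniteMeasure ρ]
    (hpos : ∀ᵐ x ∂ρ, ∀ e, 0 ≤ x.1 e)
    (w : ℝ → ℝ → Bool → ℝ)
    (hw : ∀ b t o, w b t o
      = Real.exp (-b * t) * (Real.exp (2 * b * t) - 1) ^ (if o then (1:ℕ) else 0))
    (Zpos : ∀ b > (0:ℝ), 0 < ∫ x, ∏ e, w b (x.1 e) (x.2 e) ∂ρ)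
    (hint : ∀ b > (0:ℝ),
      Integrable (fun x => (1 + ∑ e, |x.1 e|) * ∏ e, w b (x.1 e) (x.2 e)) ρ)
    (f : (E → ℝ) × (E → Bool) → ℝ) (hfm : Measurable f)
    (M : ℝ) (hfb : ∀ x, |f x| ≤ M)
    (β : ℝ) (hβ : 0 < β)
    (G : E → (E → ℝ) × (E → Bool) → ℝ)
    (hG : ∀ e x, G e x = (if x.1 e = 0 then 0 else
      2 * x.1 e * (if x.2 e then (1:ℝ) else 0) / (1 - Real.exp (-2 * β * x.1 e))) - x.1 e)
    (Ex : ℝ → ((E → ℝ) × (E → Bool) → ℝ) → ℝ)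
    (hEx : ∀ b h, Ex b h = (∫ x, h x * ∏ e, w b (x.1 e) (x.2 e) ∂ρ)
      / (∫ x, ∏ e, w b (x.1 e) (x.2 e) ∂ρ)) :
    HasDerivAt (fun b => Ex b f)
      (∑ e : E, (Ex β (fun x => f x * G e x) - Ex β f * Ex β (G e))) β := by
  classical
  have hwW : w = Wfun := by funext b t o; rw [hw]; rfl
  subst hwW
  set nn := Fintype.card E with hnn
  -- measurability
  have measW : ∀ (b : ℝ) (e : E),
      Measurable fun x : (E → ℝ) × (E → Bool) => Wfun b (x.1 e) (x.2 e) :=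
    fun b e => measurable_boolcomp _ (fun o => measurable_W_t b o) e
  have measP : ∀ b : ℝ,
      Measurable fun x : (E → ℝ) × (E → Bool) => ∏ e, Wfun b (x.1 e) (x.2 e) :=
    fun b => Finset.measurable_prod _ (fun e _ => measW b e)
  have measdW : ∀ (b : ℝ) (e : E),
      Measurable fun x : (E → ℝ) × (E → Bool) => dWfun b (x.1 e) (x.2 e) :=
    fun b e => measurable_boolcomp _ (fun o => measurable_dW_t b o) e
  have measF' : ∀ b : ℝ, Measurable fun x : (E → ℝ) × (E → Bool) =>
      ∑ e, (∏ j ∈ Finset.univ.erase e, Wfun b (x.1 j) (x.2 j)) * dWfun b (x.1 e) (x.2 e) :=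
    fun b => Finset.measurable_sum _
      (fun e _ => (Finset.measurable_prod _ (fun j _ => measW b j)).mul (measdW b e))
  have measG : ∀ e : E, Measurable fun x : (E → ℝ) × (E → Bool) =>
      (if x.1 e = 0 then 0 else
        2 * x.1 e * (if x.2 e then (1:ℝ) else 0) / (1 - Real.exp (-2 * β * x.1 e))) - x.1 e :=
    fun e => measurable_boolcomp
      (fun t o => (if t = 0 then 0 else
        2 * t * (if o then (1:ℝ) else 0) / (1 - Real.exp (-2 * β * t))) - t)
      (fun o => measurable_G_t β o) e
  -- integrability of P b for b > 0
  have hintP : ∀ b > (0:ℝ), Integrable (fun x => ∏ e, Wfun b (x.1 e) (x.2 e)) ρ := by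
    intro b hb
    refine (hint b hb).mono' (measP b).aestronglyMeasurable ?_
    filter_upwards [hpos] with x hx
    have hW : 0 ≤ ∏ e, Wfun b (x.1 e) (x.2 e) :=
      Finset.prod_nonneg fun e _ => W_nonneg hb.le (hx e) _
    have habs : (0:ℝ) ≤ ∑ e, |x.1 e| := Finset.sum_nonneg fun e _ => abs_nonneg _
    rw [Real.norm_eq_abs, abs_of_nonneg hW]
    nlinarith [hW, habs]
  -- dominating function
  set K : ℝ := (1 + 2 * (nn:ℝ) / β) * 4 ^ nn with hK
  have hint1 := hint (3*β/2) (by linarith)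
  have hint2 := hint (β/2) (by linarith)
  set bnd : (E → ℝ) × (E → Bool) → ℝ := fun x =>
    K * ((1 + ∑ e, |x.1 e|) * ∏ e, Wfun (3*β/2) (x.1 e) (x.2 e))
    + K * ((1 + ∑ e, |x.1 e|) * ∏ e, Wfun (β/2) (x.1 e) (x.2 e)) with hbnd
  have bnd_int : Integrable bnd ρ := (hint1.const_mul K).add (hint2.const_mul K)
  -- key uniform bound
  have hKey : ∀ᵐ x ∂ρ, ∀ b ∈ Metric.ball β (β/2),
      ‖∑ e, (∏ j ∈ Finset.univ.erase e, Wfun b (x.1 j) (x.2 j)) * dWfun b (x.1 e) (x.2 e)‖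
        ≤ bnd x := by
    filter_upwards [hpos] with x hx
    intro b hb
    rw [Metric.mem_ball, Real.dist_eq] at hb
    obtain ⟨hbl, hbr⟩ := abs_lt.mp hb
    have hb1 : β/2 ≤ b := by linarith
    have hb0 : 0 ≤ b := by linarith
    have hb2 : b ≤ 2*β := by linarith
    have hbd : b - β ≤ β/2 := by linarith
    have hbd2 : -(β/2) ≤ b - β := by linarith
    set T := ∑ e, x.1 e with hT
    have hT0 : 0 ≤ T := Finset.sum_nonneg fun e _ => hx e
    set Λ := ∑ e, (if x.2 e then x.1 e else -(x.1 e)) with hΛ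
    set Pb := ∏ e, Wfun b (x.1 e) (x.2 e) with hPb
    set Pβ := ∏ e, Wfun β (x.1 e) (x.2 e) with hPβ
    set Pp := ∏ e, Wfun (3*β/2) (x.1 e) (x.2 e) with hPp
    set Pm := ∏ e, Wfun (β/2) (x.1 e) (x.2 e) with hPm
    have hPb0 : 0 ≤ Pb := Finset.prod_nonneg fun e _ => W_nonneg hb0 (hx e) _
    have hPβ0 : 0 ≤ Pβ := Finset.prod_nonneg fun e _ => W_nonneg hβ.le (hx e) _
    have hPp0 : 0 ≤ Pp := Finset.prod_nonneg fun e _ => W_nonneg (by linarith) (hx e) _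
    have hPm0 : 0 ≤ Pm := Finset.prod_nonneg fun e _ => W_nonneg (by linarith) (hx e) _
    have step_a : ‖∑ e, (∏ j ∈ Finset.univ.erase e, Wfun b (x.1 j) (x.2 j))
          * dWfun b (x.1 e) (x.2 e)‖ ≤ (T + 2*(nn:ℝ)/β) * Pb := by
      calc ‖∑ e, (∏ j ∈ Finset.univ.erase e, Wfun b (x.1 j) (x.2 j))
              * dWfun b (x.1 e) (x.2 e)‖
          ≤ ∑ e, ‖(∏ j ∈ Finset.univ.erase e, Wfun b (x.1 j) (x.2 j))
              * dWfun b (x.1 e) (x.2 e)‖ := norm_sum_le _ _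
        _ ≤ ∑ e, (x.1 e + 2/β) * Pb := by
            apply Finset.sum_le_sum
            intro e _
            have hprodnn : 0 ≤ ∏ j ∈ Finset.univ.erase e, Wfun b (x.1 j) (x.2 j) :=
              Finset.prod_nonneg fun j _ => W_nonneg hb0 (hx j) _
            rw [Real.norm_eq_abs, abs_mul, abs_of_nonneg hprodnn]
            calc (∏ j ∈ Finset.univ.erase e, Wfun b (x.1 j) (x.2 j)) * |dWfun b (x.1 e) (x.2 e)|
                ≤ (∏ j ∈ Finset.univ.erase e, Wfun b (x.1 j) (x.2 j))
                  * ((x.1 e + 2/β) * Wfun b (x.1 e) (x.2 e)) :=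
                  mul_le_mul_of_nonneg_left (dW_abs_le hβ (hx e) hb1 _) hprodnn
              _ = (x.1 e + 2/β) * Pb := by
                  rw [hPb, ← Finset.prod_erase_mul Finset.univ _ (Finset.mem_univ e)]; ring
        _ = (T + 2*(nn:ℝ)/β) * Pb := by
            rw [← Finset.sum_mul, Finset.sum_add_distrib, Finset.sum_const, Finset.card_univ,
              ← hnn, nsmul_eq_mul, ← hT]
            ring
    have step_b : Pb ≤ 2^nn * (Real.exp ((b-β)*Λ) * Pβ) := by
      calc Pb ≤ ∏ e, (2 * Real.exp ((b-β)*(if x.2 e then x.1 e else -(x.1 e)))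
              * Wfun β (x.1 e) (x.2 e)) :=
            Finset.prod_le_prod (fun e _ => W_nonneg hb0 (hx e) _)
              (fun e _ => W_le_shift (hx e) hb0 hb2 _)
        _ = 2^nn * (Real.exp ((b-β)*Λ) * Pβ) := by
            rw [Finset.prod_mul_distrib, Finset.prod_mul_distrib, Finset.prod_const,
              Finset.card_univ, ← hnn, ← Real.exp_sum, ← Finset.mul_sum, ← hΛ, ← hPβ, mul_assoc]
    have step_c : Real.exp ((b-β)*Λ) ≤ Real.exp ((β/2)*Λ) + Real.exp (-(β/2)*Λ) := by
      rcases le_or_gt 0 Λ with h | h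
      · have h1 : (b-β)*Λ ≤ (β/2)*Λ := mul_le_mul_of_nonneg_right hbd h
        have := Real.exp_le_exp.mpr h1
        linarith [Real.exp_pos (-(β/2)*Λ)]
      · have h1 : (b-β)*Λ ≤ (-(β/2))*Λ := mul_le_mul_of_nonpos_right hbd2 h.le
        have := Real.exp_le_exp.mpr h1
        have h2 : Real.exp ((-(β/2))*Λ) = Real.exp (-(β/2)*Λ) := by ring_nf
        linarith [Real.exp_pos ((β/2)*Λ)]
    have step_d : Real.exp ((β/2)*Λ) * Pβ ≤ Pp := by
      rw [hΛ, Finset.mul_sum, Real.exp_sum, hPβ, ← Finset.prod_mul_distrib, hPp]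
      exact Finset.prod_le_prod
        (fun e _ => mul_nonneg (Real.exp_pos _).le (W_nonneg hβ.le (hx e) _))
        (fun e _ => W_exp_plus hβ (hx e) _)
    have step_e : Real.exp (-(β/2)*Λ) * Pβ ≤ 2^nn * Pm := by
      rw [hΛ, Finset.mul_sum, Real.exp_sum, hPβ, ← Finset.prod_mul_distrib]
      calc ∏ e, (Real.exp (-(β/2) * (if x.2 e then x.1 e else -(x.1 e)))
              * Wfun β (x.1 e) (x.2 e))
          ≤ ∏ e, (2 * Wfun (β/2) (x.1 e) (x.2 e)) :=
            Finset.prod_le_prod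
              (fun e _ => mul_nonneg (Real.exp_pos _).le (W_nonneg hβ.le (hx e) _))
              (fun e _ => W_exp_minus hβ (hx e) _)
        _ = 2^nn * Pm := by
            rw [Finset.prod_mul_distrib, Finset.prod_const, Finset.card_univ, ← hnn, hPm]
    have hcomb : Pb ≤ 2^nn * (Pp + 2^nn * Pm) := by
      calc Pb ≤ 2^nn * (Real.exp ((b-β)*Λ) * Pβ) := step_b
        _ ≤ 2^nn * ((Real.exp ((β/2)*Λ) + Real.exp (-(β/2)*Λ)) * Pβ) := by
            apply mul_le_mul_of_nonneg_left (mul_le_mul_of_nonneg_right step_c hPβ0)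
            positivity
        _ = 2^nn * (Real.exp ((β/2)*Λ) * Pβ + Real.exp (-(β/2)*Λ) * Pβ) := by ring
        _ ≤ 2^nn * (Pp + 2^nn * Pm) := by
            apply mul_le_mul_of_nonneg_left (add_le_add step_d step_e)
            positivity
    have habsT : ∑ e, |x.1 e| = T := by
      rw [hT]; exact Finset.sum_congr rfl (fun e _ => abs_of_nonneg (hx e))
    have hbndx : bnd x = K * ((1 + T) * Pp) + K * ((1 + T) * Pm) := by
      rw [hbnd]; simp only []; rw [habsT, hPp, hPm]
    have hA : T + 2*(nn:ℝ)/β ≤ (1 + 2*(nn:ℝ)/β) * (1 + T) := by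
      have h0 : 0 ≤ 2*(nn:ℝ)/β := by positivity
      nlinarith [mul_nonneg h0 hT0]
    have hA0 : 0 ≤ T + 2*(nn:ℝ)/β := by positivity
    have hA'0 : 0 ≤ (1 + 2*(nn:ℝ)/β) * (1 + T) := by positivity
    have h24 : (2:ℝ)^nn ≤ 4^nn := pow_le_pow_left₀ (by norm_num) (by norm_num) nn
    have h44 : (2:ℝ)^nn * 2^nn = 4^nn := by rw [← mul_pow]; norm_num
    have g1 : (T + 2*(nn:ℝ)/β) * (2:ℝ)^nn ≤ ((1 + 2*(nn:ℝ)/β) * (1 + T)) * 4^nn :=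
      mul_le_mul hA h24 (by positivity) hA'0
    have g2 : (T + 2*(nn:ℝ)/β) * (4:ℝ)^nn ≤ ((1 + 2*(nn:ℝ)/β) * (1 + T)) * 4^nn :=
      mul_le_mul_of_nonneg_right hA (by positivity)
    calc ‖∑ e, (∏ j ∈ Finset.univ.erase e, Wfun b (x.1 j) (x.2 j)) * dWfun b (x.1 e) (x.2 e)‖
        ≤ (T + 2*(nn:ℝ)/β) * Pb := step_a
      _ ≤ (T + 2*(nn:ℝ)/β) * (2^nn * (Pp + 2^nn * Pm)) :=
          mul_le_mul_of_nonneg_left hcomb hA0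
      _ = ((T + 2*(nn:ℝ)/β) * (2:ℝ)^nn) * Pp
          + ((T + 2*(nn:ℝ)/β) * ((2:ℝ)^nn * (2:ℝ)^nn)) * Pm := by ring
      _ = ((T + 2*(nn:ℝ)/β) * (2:ℝ)^nn) * Pp + ((T + 2*(nn:ℝ)/β) * (4:ℝ)^nn) * Pm := by
          rw [h44]
      _ ≤ (((1 + 2*(nn:ℝ)/β) * (1 + T)) * 4^nn) * Pp
          + (((1 + 2*(nn:ℝ)/β) * (1 + T)) * 4^nn) * Pm :=
          add_le_add (mul_le_mul_of_nonneg_right g1 hPp0) (mul_le_mul_of_nonneg_right g2 hPm0)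
      _ = bnd x := by rw [hbndx, hK]; ring
  -- pointwise derivative of the product
  have hDeriv : ∀ (x : (E → ℝ) × (E → Bool)) (b : ℝ),
      HasDerivAt (fun b' => ∏ e, Wfun b' (x.1 e) (x.2 e))
        (∑ e, (∏ j ∈ Finset.univ.erase e, Wfun b (x.1 j) (x.2 j)) * dWfun b (x.1 e) (x.2 e))
        b := by
    intro x b
    have := HasDerivAt.fun_finsetProd (u := Finset.univ)
      (f := fun (e : E) (b' : ℝ) => Wfun b' (x.1 e) (x.2 e))
      (f' := fun e => dWfun b (x.1 e) (x.2 e))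
      (fun e _ => hasDerivAt_W b (x.1 e) (x.2 e))
    simpa [smul_eq_mul] using this
  -- apply dominated differentiation : denominator
  obtain ⟨hZ'int, hZd⟩ := hasDerivAt_integral_of_dominated_loc_of_deriv_le (μ := ρ) (x₀ := β)
      (s := Metric.ball β (β/2))
      (F := fun b x => ∏ e, Wfun b (x.1 e) (x.2 e))
      (F' := fun b x => ∑ e, (∏ j ∈ Finset.univ.erase e, Wfun b (x.1 j) (x.2 j))
        * dWfun b (x.1 e) (x.2 e))
      (bound := bnd) (Metric.ball_mem_nhds _ (by linarith))
      (Filter.Eventually.of_forall fun b => (measP b).aestronglyMeasurable)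
      (hintP β hβ) ((measF' β).aestronglyMeasurable) hKey bnd_int
      (Filter.Eventually.of_forall fun x b _ => hDeriv x b)
  -- numerator
  have hM0 : 0 ≤ M := le_trans (abs_nonneg _) (hfb ⟨fun _ => 0, fun _ => false⟩)
  have hfP_int : Integrable (fun x => f x * ∏ e, Wfun β (x.1 e) (x.2 e)) ρ := by
    refine ((hint β hβ).const_mul M).mono' ((hfm.mul (measP β)).aestronglyMeasurable) ?_
    filter_upwards [hpos] with x hx
    have hW : 0 ≤ ∏ e, Wfun β (x.1 e) (x.2 e) :=
      Finset.prod_nonneg fun e _ => W_nonneg hβ.le (hx e) _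
    have habs : (0:ℝ) ≤ ∑ e, |x.1 e| := Finset.sum_nonneg fun e _ => abs_nonneg _
    rw [Real.norm_eq_abs, abs_mul]
    calc |f x| * |∏ e, Wfun β (x.1 e) (x.2 e)| ≤ M * |∏ e, Wfun β (x.1 e) (x.2 e)| :=
        mul_le_mul_of_nonneg_right (hfb x) (abs_nonneg _)
      _ ≤ M * ((1 + ∑ e, |x.1 e|) * ∏ e, Wfun β (x.1 e) (x.2 e)) := by
        rw [abs_of_nonneg hW]
        apply mul_le_mul_of_nonneg_left _ hM0
        nlinarith [hW, habs]
  have hKeyf : ∀ᵐ x ∂ρ, ∀ b ∈ Metric.ball β (β/2),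
      ‖f x * ∑ e, (∏ j ∈ Finset.univ.erase e, Wfun b (x.1 j) (x.2 j))
        * dWfun b (x.1 e) (x.2 e)‖ ≤ M * bnd x := by
    filter_upwards [hKey] with x hx
    intro b hb
    rw [norm_mul]
    exact mul_le_mul (by rw [Real.norm_eq_abs]; exact hfb x) (hx b hb) (norm_nonneg _) hM0
  obtain ⟨hN'int, hNd⟩ := hasDerivAt_integral_of_dominated_loc_of_deriv_le (μ := ρ) (x₀ := β)
      (s := Metric.ball β (β/2))
      (F := fun b x => f x * ∏ e, Wfun b (x.1 e) (x.2 e))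
      (F' := fun b x => f x * ∑ e, (∏ j ∈ Finset.univ.erase e, Wfun b (x.1 j) (x.2 j))
        * dWfun b (x.1 e) (x.2 e))
      (bound := fun x => M * bnd x) (Metric.ball_mem_nhds _ (by linarith))
      (Filter.Eventually.of_forall fun b => (hfm.mul (measP b)).aestronglyMeasurable)
      hfP_int ((hfm.mul (measF' β)).aestronglyMeasurable) hKeyf (bnd_int.const_mul M)
      (Filter.Eventually.of_forall fun x b _ => (hDeriv x b).const_mul (f x))
  -- identify F' β with (∑ G) * P β
  have hF'eq : ∀ x : (E → ℝ) × (E → Bool),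
      (∑ e, (∏ j ∈ Finset.univ.erase e, Wfun β (x.1 j) (x.2 j)) * dWfun β (x.1 e) (x.2 e))
      = ∑ e, ((if x.1 e = 0 then 0 else
          2 * x.1 e * (if x.2 e then (1:ℝ) else 0) / (1 - Real.exp (-2 * β * x.1 e))) - x.1 e)
          * ∏ e', Wfun β (x.1 e') (x.2 e') := by
    intro x
    apply Finset.sum_congr rfl
    intro e _
    rw [dW_eq_G_mul_W hβ, ← Finset.prod_erase_mul Finset.univ _ (Finset.mem_univ e)]
    ring
  -- per-edge integrability
  have hGPint : ∀ e : E, Integrable (fun x =>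
      ((if x.1 e = 0 then 0 else
        2 * x.1 e * (if x.2 e then (1:ℝ) else 0) / (1 - Real.exp (-2 * β * x.1 e))) - x.1 e)
      * ∏ e', Wfun β (x.1 e') (x.2 e')) ρ := by
    intro e
    refine ((hint β hβ).const_mul (1 + 1/β)).mono'
      (((measG e).mul (measP β)).aestronglyMeasurable) ?_
    filter_upwards [hpos] with x hx
    have hW : 0 ≤ ∏ e', Wfun β (x.1 e') (x.2 e') :=
      Finset.prod_nonneg fun e' _ => W_nonneg hβ.le (hx e') _
    have habs : (0:ℝ) ≤ ∑ e', |x.1 e'| := Finset.sum_nonneg fun e' _ => abs_nonneg _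
    have hle : x.1 e ≤ ∑ e', |x.1 e'| :=
      le_trans (le_abs_self _) (Finset.single_le_sum (fun i _ => abs_nonneg (x.1 i))
        (Finset.mem_univ e))
    have hGb := G_abs_le hβ (hx e) (if x.2 e then (1:ℝ) else 0)
      (by split <;> norm_num) (by split <;> norm_num)
    rw [Real.norm_eq_abs, abs_mul, abs_of_nonneg hW]
    calc |(if x.1 e = 0 then 0 else
          2 * x.1 e * (if x.2 e then (1:ℝ) else 0) / (1 - Real.exp (-2 * β * x.1 e))) - x.1 e|
          * ∏ e', Wfun β (x.1 e') (x.2 e')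
        ≤ (x.1 e + 1/β) * ∏ e', Wfun β (x.1 e') (x.2 e') :=
          mul_le_mul_of_nonneg_right hGb hW
      _ ≤ (1 + 1/β) * ((1 + ∑ e', |x.1 e'|) * ∏ e', Wfun β (x.1 e') (x.2 e')) := by
          have h1β : (0:ℝ) ≤ 1/β := by positivity
          nlinarith [mul_nonneg h1β habs, mul_le_mul_of_nonneg_right hle hW]
  have hfGPint : ∀ e : E, Integrable (fun x => f x *
      (((if x.1 e = 0 then 0 else
        2 * x.1 e * (if x.2 e then (1:ℝ) else 0) / (1 - Real.exp (-2 * β * x.1 e))) - x.1 e)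
      * ∏ e', Wfun β (x.1 e') (x.2 e'))) ρ := by
    intro e
    refine (hGPint e).bdd_mul hfm.aestronglyMeasurable (c := M) (Filter.Eventually.of_forall fun x => by
      rw [Real.norm_eq_abs]; exact hfb x)
  have hfGPint' : ∀ e : E, Integrable (fun x => f x *
      ((if x.1 e = 0 then 0 else
        2 * x.1 e * (if x.2 e then (1:ℝ) else 0) / (1 - Real.exp (-2 * β * x.1 e))) - x.1 e)
      * ∏ e', Wfun β (x.1 e') (x.2 e')) ρ := by
    intro e
    have := hfGPint e
    simpa [mul_assoc] using this
  -- value identifications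
  have hZval : (∫ x, ∑ e, (∏ j ∈ Finset.univ.erase e, Wfun β (x.1 j) (x.2 j))
        * dWfun β (x.1 e) (x.2 e) ∂ρ)
      = ∑ e, ∫ x, ((if x.1 e = 0 then 0 else
          2 * x.1 e * (if x.2 e then (1:ℝ) else 0) / (1 - Real.exp (-2 * β * x.1 e))) - x.1 e)
          * ∏ e', Wfun β (x.1 e') (x.2 e') ∂ρ := by
    calc (∫ x, ∑ e, (∏ j ∈ Finset.univ.erase e, Wfun β (x.1 j) (x.2 j))
            * dWfun β (x.1 e) (x.2 e) ∂ρ)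
        = ∫ x, ∑ e, ((if x.1 e = 0 then 0 else
            2 * x.1 e * (if x.2 e then (1:ℝ) else 0) / (1 - Real.exp (-2 * β * x.1 e))) - x.1 e)
            * ∏ e', Wfun β (x.1 e') (x.2 e') ∂ρ :=
          integral_congr_ae (Filter.Eventually.of_forall hF'eq)
      _ = _ := integral_finset_sum _ (fun e _ => hGPint e)
  have hNval : (∫ x, f x * ∑ e, (∏ j ∈ Finset.univ.erase e, Wfun β (x.1 j) (x.2 j))
        * dWfun β (x.1 e) (x.2 e) ∂ρ)
      = ∑ e, ∫ x, f x * ((if x.1 e = 0 then 0 else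
          2 * x.1 e * (if x.2 e then (1:ℝ) else 0) / (1 - Real.exp (-2 * β * x.1 e))) - x.1 e)
          * ∏ e', Wfun β (x.1 e') (x.2 e') ∂ρ := by
    calc (∫ x, f x * ∑ e, (∏ j ∈ Finset.univ.erase e, Wfun β (x.1 j) (x.2 j))
            * dWfun β (x.1 e) (x.2 e) ∂ρ)
        = ∫ x, ∑ e, f x * ((if x.1 e = 0 then 0 else
            2 * x.1 e * (if x.2 e then (1:ℝ) else 0) / (1 - Real.exp (-2 * β * x.1 e))) - x.1 e)
            * ∏ e', Wfun β (x.1 e') (x.2 e') ∂ρ := by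
          apply integral_congr_ae
          apply Filter.Eventually.of_forall
          intro x
          simp only [hF'eq x, Finset.mul_sum]
          exact Finset.sum_congr rfl fun e _ => (mul_assoc _ _ _).symm
      _ = _ := integral_finset_sum _ (fun e _ => hfGPint' e)
  have hZ0 : (∫ x, ∏ e, Wfun β (x.1 e) (x.2 e) ∂ρ) ≠ 0 := ne_of_gt (Zpos β hβ)
  have hdiv := hNd.fun_div hZd hZ0
  simp only [hEx, hG]
  refine hdiv.congr_deriv ?_
  rw [hNval, hZval]
  rw [Finset.sum_sub_distrib, ← Finset.sum_div, ← Finset.mul_sum, ← Finset.sum_div]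
  have key : ∀ S T N Z : ℝ, Z ≠ 0 → (S * Z - N * T) / Z ^ 2 = S / Z - N / Z * (T / Z) := by
    intro S T N Z hZ; field_simp
  exact key _ _ _ _ hZ0
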